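/- arXiv:1106.6013 — 2 statements merged into one kernel-verified Lean document; each statement's English description precedes it below -/
import Mathlib

section
/- Suppose r(x) ≥ 0 a.e. on [a,b] and ∫_a^b r > 0. If u and z are nontrivial real solutions on [a,b] of -(p u')' + q u = λ r u and -(p z')' + q z = μ r z respectively with real λ < μ, and u(x₁) = u(x₂) = 0 for consecutive zeros x₁ < x₂ of u with r not a.e. zero on (x₁,x₂), then z has a zero in (x₁, x₂). -/
open MeasureTheory Set

/-- Real solution of `-(p y')' + q y = λ r y` on `[a,b]` in the absolutely
continuous (Carathéodory) sense, with quasi-derivative `py = p·y'`. -/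
def IsRealSLSolution (p q r : ℝ → ℝ) (a b : ℝ) (l : ℝ) (y py : ℝ → ℝ) : Prop :=
  (∀ x ∈ Set.Icc a b, y x = y a + ∫ t in a..x, py t / p t) ∧
  (∀ x ∈ Set.Icc a b, py x = py a + ∫ t in a..x, (q t * y t - l * r t * y t))

lemma setIntegral_pos_of_ae_pos {s : Set ℝ} (hμ : 0 < volume s) {f : ℝ → ℝ}
    (hf : ∀ᵐ x ∂(volume.restrict s), 0 < f x) (hfi : IntegrableOn f s) :
    0 < ∫ x in s, f x := by
  have h0 : 0 ≤ᵐ[volume.restrict s] f := hf.mono fun x hx => hx.le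
  rcases (setIntegral_nonneg_of_ae_restrict h0).lt_or_eq with h | h
  · exact h
  · exfalso
    have hz : f =ᵐ[volume.restrict s] 0 :=
      (setIntegral_eq_zero_iff_of_nonneg_ae h0 hfi).mp h.symm
    have : ∀ᵐ _x ∂(volume.restrict s), False := by
      filter_upwards [hf, hz] with x h1 h2
      rw [h2] at h1; exact lt_irrefl 0 h1
    rw [ae_iff] at this
    simp only [not_false_iff, setOf_true] at this
    rw [Measure.restrict_apply_univ] at this
    exact hμ.ne' this

lemma integrableOn_mul_of_bdd {f g : ℝ → ℝ} {s : Set ℝ}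
    (hf : IntegrableOn f s) (hg : AEStronglyMeasurable g (volume.restrict s)) {C : ℝ}
    (hC : ∀ᵐ x ∂(volume.restrict s), |g x| ≤ C) :
    IntegrableOn (fun x => f x * g x) s := by
  refine Integrable.mono' (hf.abs.const_mul C) (hf.aestronglyMeasurable.mul hg) ?_
  filter_upwards [hC] with x hx
  rw [Real.norm_eq_abs, abs_mul, mul_comm]
  exact mul_le_mul_of_nonneg_right hx (abs_nonneg _)

lemma continuousOn_Ico_of_forall {f : ℝ → ℝ} {a c : ℝ}
    (h : ∀ x ∈ Ico a c, ContinuousOn f (Icc a x)) : ContinuousOn f (Ico a c) := by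
  intro t ht
  obtain ⟨x, htx, hxc⟩ := exists_between ht.2
  have h1 : ContinuousWithinAt f (Icc a x) t :=
    h x ⟨le_trans ht.1 htx.le, hxc⟩ t ⟨ht.1, htx.le⟩
  refine h1.mono_of_mem_nhdsWithin ?_
  have hmem : Ico a c ∩ Iio x ∈ nhdsWithin t (Ico a c) :=
    inter_mem_nhdsWithin _ (Iio_mem_nhds htx)
  exact Filter.mem_of_superset hmem fun y hy => ⟨hy.1.1, hy.2.le⟩


lemma double_swap {x₁ x₂ : ℝ} (h : x₁ ≤ x₂) {f g : ℝ → ℝ}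
    (hf : IntegrableOn f (Ioc x₁ x₂)) (hg : IntegrableOn g (Ioc x₁ x₂)) :
    (∫ t in Ioc x₁ x₂, f t * ∫ s in Ioc x₁ t, g s)
      + (∫ t in Ioc x₁ x₂, g t * ∫ s in Ioc x₁ t, f s)
      = (∫ t in Ioc x₁ x₂, f t) * (∫ t in Ioc x₁ x₂, g t) := by
  set μ := volume.restrict (Ioc x₁ x₂) with hμ
  set H : ℝ × ℝ → ℝ := fun z => f z.1 * g z.2 with hH
  have hHint : Integrable H (μ.prod μ) := hf.mul_prod hg
  set T : Set (ℝ × ℝ) := {z : ℝ × ℝ | z.2 ≤ z.1} with hT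
  have hTm : MeasurableSet T := measurableSet_le measurable_snd measurable_fst
  have hTc : MeasurableSet Tᶜ := hTm.compl
  -- first term
  have e1 : (∫ t in Ioc x₁ x₂, f t * ∫ s in Ioc x₁ t, g s)
      = ∫ z, T.indicator H z ∂(μ.prod μ) := by
    rw [MeasureTheory.integral_prod _ (hHint.indicator hTm)]
    refine (setIntegral_congr_fun measurableSet_Ioc fun t ht => ?_).symm
    have : (fun s => T.indicator H (t, s)) = (Iic t).indicator (fun s => f t * g s) := by
      funext s
      by_cases hs : s ≤ t
      · rw [indicator_of_mem (by exact hs : (t,s) ∈ T), indicator_of_mem (by exact hs)]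
      · rw [indicator_of_notMem (by exact hs : ¬ (t,s) ∈ T), indicator_of_notMem (by exact hs)]
    rw [this, MeasureTheory.integral_indicator measurableSet_Iic]
    rw [hμ, Measure.restrict_restrict measurableSet_Iic]
    have hset : Iic t ∩ Ioc x₁ x₂ = Ioc x₁ t := by
      ext w; simp only [mem_inter_iff, mem_Iic, mem_Ioc]
      constructor
      · rintro ⟨h1, h2, h3⟩; exact ⟨h2, h1⟩
      · rintro ⟨h1, h2⟩; exact ⟨h2, h1, h2.trans ht.2⟩
    rw [hset, MeasureTheory.integral_const_mul]
  -- second term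
  have e2 : (∫ t in Ioc x₁ x₂, g t * ∫ s in Ioc x₁ t, f s)
      = ∫ z, Tᶜ.indicator H z ∂(μ.prod μ) := by
    rw [MeasureTheory.integral_prod_symm _ (hHint.indicator hTc)]
    refine (setIntegral_congr_fun measurableSet_Ioc fun t ht => ?_).symm
    have : (fun s => Tᶜ.indicator H (s, t)) = (Iio t).indicator (fun s => f s * g t) := by
      funext s
      by_cases hs : s < t
      · rw [indicator_of_mem (by exact not_le.mpr hs : (s,t) ∈ Tᶜ), indicator_of_mem (by exact hs)]
      · rw [indicator_of_notMem (by exact not_not.mpr (not_lt.mp hs) : ¬ (s,t) ∈ Tᶜ),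
          indicator_of_notMem (by exact hs)]
    rw [this, MeasureTheory.integral_indicator measurableSet_Iio]
    rw [hμ, Measure.restrict_restrict measurableSet_Iio]
    have hset : Iio t ∩ Ioc x₁ x₂ = Ioo x₁ t := by
      ext w; simp only [mem_inter_iff, mem_Iio, mem_Ioc, mem_Ioo]
      constructor
      · rintro ⟨h1, h2, h3⟩; exact ⟨h2, h1⟩
      · rintro ⟨h1, h2⟩; exact ⟨h2, h1, (h2.le.trans ht.2)⟩
    rw [hset]
    rw [show (∫ s in Ioo x₁ t, H (s, t)) = ∫ s in Ioo x₁ t, f s * g t from rfl]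
    rw [← MeasureTheory.integral_Ioc_eq_integral_Ioo]
    rw [show (∫ s in Ioc x₁ t, f s * g t) = ∫ s in Ioc x₁ t, g t * f s from by
      simp_rw [mul_comm]]
    rw [MeasureTheory.integral_const_mul]
  rw [e1, e2, ← MeasureTheory.integral_add (hHint.indicator hTm) (hHint.indicator hTc)]
  have : (fun z => T.indicator H z + Tᶜ.indicator H z) = H := by
    have := Set.indicator_self_add_compl T H
    funext z; exact congrFun this z
  rw [this]
  exact MeasureTheory.integral_prod_mul f g

lemma parts {x₁ x₂ : ℝ} (h : x₁ ≤ x₂) {f g F G : ℝ → ℝ}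
    (hf : IntegrableOn f (Icc x₁ x₂)) (hg : IntegrableOn g (Icc x₁ x₂))
    (hF : ∀ x ∈ Icc x₁ x₂, F x = F x₁ + ∫ t in Ioc x₁ x, f t)
    (hG : ∀ x ∈ Icc x₁ x₂, G x = G x₁ + ∫ t in Ioc x₁ x, g t) :
    F x₂ * G x₂ - F x₁ * G x₁
      = (∫ t in Ioc x₁ x₂, f t * G t) + ∫ t in Ioc x₁ x₂, F t * g t := by
  have hf' : IntegrableOn f (Ioc x₁ x₂) := hf.mono_set Ioc_subset_Icc_self
  have hg' : IntegrableOn g (Ioc x₁ x₂) := hg.mono_set Ioc_subset_Icc_self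
  have key : ∀ (k : ℝ → ℝ), IntegrableOn k (Icc x₁ x₂) →
      AEStronglyMeasurable (fun x => ∫ t in Ioc x₁ x, k t) (volume.restrict (Ioc x₁ x₂)) ∧
      ∃ C, ∀ᵐ x ∂(volume.restrict (Ioc x₁ x₂)), |∫ t in Ioc x₁ x, k t| ≤ C := by
    intro k hk
    have hP : ContinuousOn (fun x => ∫ t in Ioc x₁ x, k t) (Icc x₁ x₂) :=
      intervalIntegral.continuousOn_primitive hk
    constructor
    · exact (hP.aestronglyMeasurable measurableSet_Icc).mono_measure
        (Measure.restrict_mono Ioc_subset_Icc_self le_rfl)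
    · obtain ⟨C, hC⟩ := isCompact_Icc.exists_bound_of_continuousOn hP
      exact ⟨C, by
        filter_upwards [ae_restrict_mem measurableSet_Ioc] with x hx
        exact hC x (Ioc_subset_Icc_self hx)⟩
  obtain ⟨hPgm, Cg, hCg⟩ := key g hg
  obtain ⟨hPfm, Cf, hCf⟩ := key f hf
  have i1 : IntegrableOn (fun t => f t * ∫ s in Ioc x₁ t, g s) (Ioc x₁ x₂) :=
    integrableOn_mul_of_bdd hf' hPgm hCg
  have i2 : IntegrableOn (fun t => g t * ∫ s in Ioc x₁ t, f s) (Ioc x₁ x₂) :=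
    integrableOn_mul_of_bdd hg' hPfm hCf
  have e1 : (∫ t in Ioc x₁ x₂, f t * G t)
      = (∫ t in Ioc x₁ x₂, f t) * G x₁
        + ∫ t in Ioc x₁ x₂, f t * ∫ s in Ioc x₁ t, g s := by
    rw [setIntegral_congr_fun measurableSet_Ioc
      (fun t ht => by dsimp only; rw [hG t (Ioc_subset_Icc_self ht)] :
        EqOn (fun t => f t * G t)
          (fun t => f t * (G x₁ + ∫ s in Ioc x₁ t, g s)) (Ioc x₁ x₂))]
    simp_rw [mul_add]
    rw [MeasureTheory.integral_add (hf'.mul_const _) i1, MeasureTheory.integral_mul_const]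
  have e2 : (∫ t in Ioc x₁ x₂, F t * g t)
      = F x₁ * (∫ t in Ioc x₁ x₂, g t)
        + ∫ t in Ioc x₁ x₂, g t * ∫ s in Ioc x₁ t, f s := by
    rw [setIntegral_congr_fun measurableSet_Ioc
      (fun t ht => by dsimp only; rw [hF t (Ioc_subset_Icc_self ht)]; ring :
        EqOn (fun t => F t * g t)
          (fun t => F x₁ * g t + g t * ∫ s in Ioc x₁ t, f s) (Ioc x₁ x₂))]
    rw [MeasureTheory.integral_add (hg'.const_mul _) i2, MeasureTheory.integral_const_mul]
  have hds := double_swap h hf' hg'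
  have hF2 := hF x₂ (right_mem_Icc.mpr h)
  have hG2 := hG x₂ (right_mem_Icc.mpr h)
  rw [e1, e2, hF2, hG2]
  linarith [hds]

lemma contOn_primitive_eq {f Y : ℝ → ℝ} {a x ya : ℝ}
    (hint : IntegrableOn f (Icc a x)) (hY : ∀ w ∈ Icc a x, Y w = ya + ∫ t in a..w, f t) :
    ContinuousOn Y (Icc a x) := by
  have h := intervalIntegral.continuousOn_primitive (μ := volume) hint
  refine ContinuousOn.congr ((continuousOn_const (c := ya)).add h) fun w hw => ?_
  rw [hY w hw, intervalIntegral.integral_of_le hw.1]; rfl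

lemma h2_integrable {q r y : ℝ → ℝ} {s : Set ℝ} (l : ℝ)
    (hq : IntegrableOn q s) (hr : IntegrableOn r s)
    (hy : AEStronglyMeasurable y (volume.restrict s)) {C : ℝ}
    (hC : ∀ᵐ x ∂(volume.restrict s), |y x| ≤ C) :
    IntegrableOn (fun t => q t * y t - l * r t * y t) s := by
  have hb : Integrable (fun t => (|q t| + |l| * |r t|) * C) (volume.restrict s) :=
    (hq.abs.add (hr.abs.const_mul _)).mul_const _
  refine Integrable.mono' hb
    ((hq.aestronglyMeasurable.mul hy).sub ((hr.aestronglyMeasurable.const_mul l).mul hy)) ?_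
  filter_upwards [hC] with t ht
  have hC0 : 0 ≤ C := (abs_nonneg _).trans ht
  have h1 : |q t * y t| ≤ |q t| * C := by
    rw [abs_mul]; exact mul_le_mul_of_nonneg_left ht (abs_nonneg _)
  have h2 : |l * r t * y t| ≤ |l| * |r t| * C := by
    rw [abs_mul, abs_mul]
    exact mul_le_mul_of_nonneg_left ht (mul_nonneg (abs_nonneg _) (abs_nonneg _))
  calc ‖q t * y t - l * r t * y t‖ ≤ |q t * y t| + |l * r t * y t| := abs_sub _ _
  _ ≤ |q t| * C + |l| * |r t| * C := add_le_add h1 h2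
  _ = (|q t| + |l| * |r t|) * C := by ring

lemma h1_integrable {p py : ℝ → ℝ} {s : Set ℝ}
    (hp : ∀ᵐ x ∂(volume.restrict s), 0 < p x)
    (hip : IntegrableOn (fun x => (p x)⁻¹) s)
    (hpy : AEStronglyMeasurable py (volume.restrict s)) {C : ℝ}
    (hC : ∀ᵐ x ∂(volume.restrict s), |py x| ≤ C) :
    IntegrableOn (fun t => py t / p t) s := by
  refine Integrable.mono' (hip.const_mul C)
    (((hpy.mul hip.aestronglyMeasurable)).congr
      (Filter.Eventually.of_forall fun x => (div_eq_mul_inv _ _).symm)) ?_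
  filter_upwards [hp, hC] with x h0 hCx
  rw [Real.norm_eq_abs, abs_div, abs_of_pos h0, div_eq_mul_inv]
  exact mul_le_mul_of_nonneg_right hCx (inv_nonneg.mpr h0.le)

lemma sl_regularity {p q r : ℝ → ℝ} {a b : ℝ} (hab : a ≤ b)
    (hp : ∀ᵐ x ∂(volume.restrict (Icc a b)), 0 < p x)
    (hq : IntegrableOn q (Icc a b)) (hr : IntegrableOn r (Icc a b))
    (hip : IntegrableOn (fun x => (p x)⁻¹) (Icc a b))
    {l : ℝ} {y py : ℝ → ℝ} (hsol : IsRealSLSolution p q r a b l y py) :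
    IntegrableOn (fun t => py t / p t) (Icc a b) ∧
    IntegrableOn (fun t => q t * y t - l * r t * y t) (Icc a b) ∧
    ContinuousOn y (Icc a b) ∧ ContinuousOn py (Icc a b) := by
  obtain ⟨hs1, hs2⟩ := hsol
  have hsol : (∀ x ∈ Icc a b, y x = y a + ∫ t in a..x, py t / p t) ∧
      (∀ x ∈ Icc a b, py x = py a + ∫ t in a..x, (q t * y t - l * r t * y t)) := ⟨hs1, hs2⟩
  have hsub : ∀ {x : ℝ}, x ∈ Icc a b → Icc a x ⊆ Icc a b :=
    fun hx => Icc_subset_Icc le_rfl hx.2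
  have hpmono : ∀ {s : Set ℝ}, s ⊆ Icc a b → ∀ᵐ w ∂(volume.restrict s), 0 < p w :=
    fun hs => ae_restrict_of_ae_restrict_of_subset hs hp
  -- regularity on [a,x] given integrability of py/p there
  have cont_of : ∀ x ∈ Icc a b, IntegrableOn (fun t => py t / p t) (Icc a x) →
      ContinuousOn y (Icc a x) ∧
      IntegrableOn (fun t => q t * y t - l * r t * y t) (Icc a x) ∧
      ContinuousOn py (Icc a x) := by
    intro x hx hint
    have hyc : ContinuousOn y (Icc a x) :=
      contOn_primitive_eq hint fun w hw => hsol.1 w (hsub hx hw)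
    obtain ⟨C, hC⟩ := isCompact_Icc.exists_bound_of_continuousOn hyc
    have hC' : ∀ᵐ w ∂(volume.restrict (Icc a x)), |y w| ≤ C := by
      filter_upwards [ae_restrict_mem measurableSet_Icc] with w hw using hC w hw
    have h2int : IntegrableOn (fun t => q t * y t - l * r t * y t) (Icc a x) :=
      h2_integrable l (hq.mono_set (hsub hx)) (hr.mono_set (hsub hx))
        (hyc.aestronglyMeasurable measurableSet_Icc) hC'
    exact ⟨hyc, h2int, contOn_primitive_eq h2int fun w hw => hsol.2 w (hsub hx hw)⟩
  set A : Set ℝ := {x | x ∈ Icc a b ∧ IntegrableOn (fun t => py t / p t) (Icc a x)} with hA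
  have hAa : a ∈ A := ⟨left_mem_Icc.mpr hab, by
    rw [Icc_self]
    exact (integrableOn_singleton_iff).mpr (Or.inr (by simp))⟩
  have hbddA : BddAbove A := ⟨b, fun x hx => hx.1.2⟩
  have hAne : A.Nonempty := ⟨a, hAa⟩
  set c := sSup A with hc
  have hac : a ≤ c := le_csSup hbddA hAa
  have hcb : c ≤ b := csSup_le hAne fun x hx => hx.1.2
  have hcI : c ∈ Icc a b := ⟨hac, hcb⟩
  have hlt : ∀ x, a ≤ x → x < c → IntegrableOn (fun t => py t / p t) (Icc a x) := by
    intro x hax hxc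
    obtain ⟨w, hwA, hxw⟩ := exists_lt_of_lt_csSup hAne hxc
    exact hwA.2.mono_set (Icc_subset_Icc le_rfl hxw.le)
  -- boundedness on [a, c)
  have hbd : ∃ M, ∀ t ∈ Ico a c, |y t| ≤ M ∧ |py t| ≤ M := by
    rcases eq_or_lt_of_le hac with heq | halc
    · exact ⟨0, fun t ht => absurd (lt_of_lt_of_le ht.2 heq.ge) (not_lt.mpr ht.1)⟩
    -- choose s close to c
    have hgint : IntegrableOn (fun t => (p t)⁻¹ + (|q t| + |l| * |r t|)) (Icc a b) :=
      hip.add (hq.abs.add (hr.abs.const_mul _))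
    have hg0 : ∀ {u : Set ℝ}, u ⊆ Icc a b →
        ∀ᵐ w ∂(volume.restrict u), 0 ≤ (p w)⁻¹ + (|q w| + |l| * |r w|) := by
      intro u hu
      filter_upwards [hpmono hu] with w h0
      have : (0:ℝ) ≤ (p w)⁻¹ := inv_nonneg.mpr h0.le
      positivity
    have hψ : ContinuousOn (fun x => ∫ t in Ioc a x, ((p t)⁻¹ + (|q t| + |l| * |r t|)))
        (Icc a c) := intervalIntegral.continuousOn_primitive (hgint.mono_set (hsub hcI))
    have hne : (nhdsWithin c (Ico a c)).NeBot := by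
      rw [← mem_closure_iff_nhdsWithin_neBot, closure_Ico halc.ne]
      exact right_mem_Icc.mpr hac
    have hten : Filter.Tendsto (fun x => ∫ t in Ioc a x, ((p t)⁻¹ + (|q t| + |l| * |r t|)))
        (nhdsWithin c (Ico a c))
        (nhds (∫ t in Ioc a c, ((p t)⁻¹ + (|q t| + |l| * |r t|)))) :=
      ((hψ c (right_mem_Icc.mpr hac)).mono_left (nhdsWithin_mono c Ico_subset_Icc_self))
    obtain ⟨s, hsd, hsIco⟩ :=
      ((Metric.tendsto_nhds.mp hten (1/2) (by norm_num)).and eventually_mem_nhdsWithin).exists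
    have hsplit : (∫ t in Ioc a c, ((p t)⁻¹ + (|q t| + |l| * |r t|)))
        = (∫ t in Ioc a s, ((p t)⁻¹ + (|q t| + |l| * |r t|)))
          + ∫ t in Ioc s c, ((p t)⁻¹ + (|q t| + |l| * |r t|)) := by
      rw [← setIntegral_union (Set.Ioc_disjoint_Ioc_of_le le_rfl) measurableSet_Ioc
        (hgint.mono_set (fun w hw => ⟨hw.1.le, (hw.2.trans hsIco.2.le).trans hcb⟩))
        (hgint.mono_set (fun w hw => ⟨hsIco.1.trans hw.1.le, hw.2.trans hcb⟩)),
        Set.Ioc_union_Ioc_eq_Ioc hsIco.1 hsIco.2.le]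
    have hphi : (∫ t in Ioc s c, ((p t)⁻¹ + (|q t| + |l| * |r t|))) < 1/2 := by
      rw [Real.dist_eq] at hsd
      have := abs_lt.mp hsd
      linarith [this.1, this.2, hsplit]
    have hIocsub : ∀ {τ : ℝ}, τ ≤ c → Ioc s τ ⊆ Icc a b :=
      fun hτ w hw => ⟨hsIco.1.trans hw.1.le, (hw.2.trans hτ).trans hcb⟩
    have hmonoφ : ∀ τ, τ ≤ c → (∫ t in Ioc s τ, ((p t)⁻¹ + (|q t| + |l| * |r t|)))
        ≤ ∫ t in Ioc s c, ((p t)⁻¹ + (|q t| + |l| * |r t|)) := by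
      intro τ hτ
      refine setIntegral_mono_set (hgint.mono_set (hIocsub le_rfl)) (hg0 (hIocsub le_rfl))
        (HasSubset.Subset.eventuallyLE (Ioc_subset_Ioc_right hτ))
    -- bounds on [a,s]
    obtain ⟨hycs, _, hpycs⟩ := cont_of s ⟨hsIco.1, hsIco.2.le.trans hcb⟩
      (hlt s hsIco.1 hsIco.2)
    obtain ⟨Cy, hCy⟩ := isCompact_Icc.exists_bound_of_continuousOn hycs
    obtain ⟨Cp, hCp⟩ := isCompact_Icc.exists_bound_of_continuousOn hpycs
    have hCy0 : |y s| ≤ Cy := hCy s (right_mem_Icc.mpr hsIco.1)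
    have hCp0 : |py s| ≤ Cp := hCp s (right_mem_Icc.mpr hsIco.1)
    refine ⟨2*Cy + 2*Cp + 1, ?_⟩
    intro t ht
    rcases le_or_gt t s with hts | hst
    · have h1 := hCy t ⟨ht.1, hts⟩
      have h2 := hCp t ⟨ht.1, hts⟩
      rw [Real.norm_eq_abs] at h1 h2
      constructor <;> nlinarith [abs_nonneg (y s), abs_nonneg (py s), hCy0, hCp0]
    -- s < t < c
    have htI : t ∈ Icc a b := ⟨ht.1, ht.2.le.trans hcb⟩
    have hint_t : IntegrableOn (fun w => py w / p w) (Icc a t) := hlt t ht.1 ht.2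
    obtain ⟨hyct, h2intt, hpyct⟩ := cont_of t htI hint_t
    have hsttop : Icc s t ⊆ Icc a t := Icc_subset_Icc hsIco.1 le_rfl
    have II1 : ∀ w ∈ Icc a t, IntervalIntegrable (fun w => py w / p w) volume a w :=
      fun w hw => (intervalIntegrable_iff_integrableOn_Ioc_of_le hw.1).mpr
        (hint_t.mono_set (fun z hz => ⟨hz.1.le, hz.2.trans hw.2⟩))
    have II2 : ∀ w ∈ Icc a t, IntervalIntegrable
        (fun w => q w * y w - l * r w * y w) volume a w :=
      fun w hw => (intervalIntegrable_iff_integrableOn_Ioc_of_le hw.1).mpr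
        (h2intt.mono_set (fun z hz => ⟨hz.1.le, hz.2.trans hw.2⟩))
    have hyeq : ∀ τ ∈ Icc s t, y τ = y s + ∫ w in Ioc s τ, py w / p w := by
      intro τ hτ
      have h1 := hsol.1 τ ⟨hsIco.1.trans hτ.1, (hτ.2.trans ht.2.le).trans hcb⟩
      have h2 := hsol.1 s ⟨hsIco.1, hsIco.2.le.trans hcb⟩
      have h3 := intervalIntegral.integral_interval_sub_left
        (II1 τ ⟨hsIco.1.trans hτ.1, hτ.2⟩) (II1 s ⟨hsIco.1, hst.le⟩)
      have h4 := intervalIntegral.integral_of_le (f := fun w => py w / p w)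
        (μ := volume) hτ.1
      rw [h1, h2]; linarith [h3, h4]
    have hpyeq : ∀ τ ∈ Icc s t, py τ = py s
        + ∫ w in Ioc s τ, (q w * y w - l * r w * y w) := by
      intro τ hτ
      have h1 := hsol.2 τ ⟨hsIco.1.trans hτ.1, (hτ.2.trans ht.2.le).trans hcb⟩
      have h2 := hsol.2 s ⟨hsIco.1, hsIco.2.le.trans hcb⟩
      have h3 := intervalIntegral.integral_interval_sub_left
        (II2 τ ⟨hsIco.1.trans hτ.1, hτ.2⟩) (II2 s ⟨hsIco.1, hst.le⟩)
      have h4 := intervalIntegral.integral_of_le (f := fun w => q w * y w - l * r w * y w)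
        (μ := volume) hτ.1
      rw [h1, h2]; linarith [h3, h4]
    obtain ⟨tu, htu, hmaxu⟩ := isCompact_Icc.exists_isMaxOn
      (⟨s, left_mem_Icc.mpr hst.le⟩ : (Icc s t).Nonempty)
      (continuous_abs.comp_continuousOn (hyct.mono hsttop))
    obtain ⟨tp, htp, hmaxp⟩ := isCompact_Icc.exists_isMaxOn
      (⟨s, left_mem_Icc.mpr hst.le⟩ : (Icc s t).Nonempty)
      (continuous_abs.comp_continuousOn (hpyct.mono hsttop))
    have hmaxu' : ∀ w ∈ Icc s t, |y w| ≤ |y tu| := fun w hw => hmaxu hw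
    have hmaxp' : ∀ w ∈ Icc s t, |py w| ≤ |py tp| := fun w hw => hmaxp hw
    have claim1 : ∀ τ ∈ Icc s t, |y τ| ≤ |y s| + |py tp| * (1/2) := by
      intro τ hτ
      rw [hyeq τ hτ]
      have hb1 : |∫ w in Ioc s τ, py w / p w| ≤ ∫ w in Ioc s τ, |py w / p w| := by
        simpa only [Real.norm_eq_abs] using MeasureTheory.norm_integral_le_integral_norm
          (f := fun w => py w / p w) (μ := volume.restrict (Ioc s τ))
      have hb2 : (∫ w in Ioc s τ, |py w / p w|)
          ≤ ∫ w in Ioc s τ, |py tp| * ((p w)⁻¹ + (|q w| + |l| * |r w|)) := by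
        refine integral_mono_ae ((hint_t.mono_set
            (fun z hz => ⟨hsIco.1.trans hz.1.le, hz.2.trans hτ.2⟩)).abs)
          ((hgint.mono_set (hIocsub (hτ.2.trans ht.2.le))).const_mul _) ?_
        filter_upwards [hpmono (hIocsub (hτ.2.trans ht.2.le)),
          ae_restrict_mem measurableSet_Ioc] with w h0 hw
        have hpw : |py w| ≤ |py tp| := hmaxp' w ⟨hw.1.le, hw.2.trans hτ.2⟩
        rw [abs_div, abs_of_pos h0, div_eq_mul_inv]
        calc |py w| * (p w)⁻¹ ≤ |py tp| * (p w)⁻¹ :=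
              mul_le_mul_of_nonneg_right hpw (inv_nonneg.mpr h0.le)
        _ ≤ |py tp| * ((p w)⁻¹ + (|q w| + |l| * |r w|)) := by
              refine mul_le_mul_of_nonneg_left ?_ (abs_nonneg _)
              have : (0:ℝ) ≤ |q w| + |l| * |r w| := by positivity
              linarith
      rw [MeasureTheory.integral_const_mul] at hb2
      have hb3 : (∫ w in Ioc s τ, ((p w)⁻¹ + (|q w| + |l| * |r w|))) ≤ 1/2 :=
        (hmonoφ τ (hτ.2.trans ht.2.le)).trans hphi.le
      have habs := abs_add_le (y s) (∫ w in Ioc s τ, py w / p w)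
      have : |py tp| * (∫ w in Ioc s τ, ((p w)⁻¹ + (|q w| + |l| * |r w|)))
          ≤ |py tp| * (1/2) := mul_le_mul_of_nonneg_left hb3 (abs_nonneg _)
      linarith [abs_abs (y s)]
    have claim2 : ∀ τ ∈ Icc s t, |py τ| ≤ |py s| + |y tu| * (1/2) := by
      intro τ hτ
      rw [hpyeq τ hτ]
      have hb1 : |∫ w in Ioc s τ, (q w * y w - l * r w * y w)|
          ≤ ∫ w in Ioc s τ, |q w * y w - l * r w * y w| := by
        simpa only [Real.norm_eq_abs] using MeasureTheory.norm_integral_le_integral_norm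
          (f := fun w => q w * y w - l * r w * y w) (μ := volume.restrict (Ioc s τ))
      have hb2 : (∫ w in Ioc s τ, |q w * y w - l * r w * y w|)
          ≤ ∫ w in Ioc s τ, |y tu| * ((p w)⁻¹ + (|q w| + |l| * |r w|)) := by
        refine integral_mono_ae ((h2intt.mono_set
            (fun z hz => ⟨hsIco.1.trans hz.1.le, hz.2.trans hτ.2⟩)).abs)
          ((hgint.mono_set (hIocsub (hτ.2.trans ht.2.le))).const_mul _) ?_
        filter_upwards [hpmono (hIocsub (hτ.2.trans ht.2.le)),
          ae_restrict_mem measurableSet_Ioc] with w h0 hw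
        have hyw : |y w| ≤ |y tu| := hmaxu' w ⟨hw.1.le, hw.2.trans hτ.2⟩
        have e1 : |q w * y w| ≤ |q w| * |y tu| := by
          rw [abs_mul]; exact mul_le_mul_of_nonneg_left hyw (abs_nonneg _)
        have e2 : |l * r w * y w| ≤ |l| * |r w| * |y tu| := by
          rw [abs_mul, abs_mul]
          exact mul_le_mul_of_nonneg_left hyw (mul_nonneg (abs_nonneg _) (abs_nonneg _))
        have e3 := abs_sub (q w * y w) (l * r w * y w)
        have e4 : (0:ℝ) ≤ (p w)⁻¹ := inv_nonneg.mpr h0.le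
        have e5 : (0:ℝ) ≤ |y tu| := abs_nonneg _
        nlinarith
      rw [MeasureTheory.integral_const_mul] at hb2
      have hb3 : (∫ w in Ioc s τ, ((p w)⁻¹ + (|q w| + |l| * |r w|))) ≤ 1/2 :=
        (hmonoφ τ (hτ.2.trans ht.2.le)).trans hphi.le
      have habs := abs_add_le (py s) (∫ w in Ioc s τ, (q w * y w - l * r w * y w))
      have : |y tu| * (∫ w in Ioc s τ, ((p w)⁻¹ + (|q w| + |l| * |r w|)))
          ≤ |y tu| * (1/2) := mul_le_mul_of_nonneg_left hb3 (abs_nonneg _)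
      linarith [abs_abs (py s)]
    have HU := claim1 tu htu
    have HS := claim2 tp htp
    have hyt := hmaxu' t (right_mem_Icc.mpr hst.le)
    have hpyt := hmaxp' t (right_mem_Icc.mpr hst.le)
    constructor <;> nlinarith [abs_nonneg (y tu), abs_nonneg (py tp),
      abs_nonneg (y s), abs_nonneg (py s)]
  -- c ∈ A
  have hIcoSub : Ico a c ⊆ Icc a b := fun w hw => ⟨hw.1, hw.2.le.trans hcb⟩
  have hcA : c ∈ A := by
    refine ⟨hcI, ?_⟩
    rw [integrableOn_Icc_iff_integrableOn_Ico]
    obtain ⟨M, hM⟩ := hbd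
    have hpyco : ContinuousOn py (Ico a c) :=
      continuousOn_Ico_of_forall fun x hx =>
        (cont_of x ⟨hx.1, hx.2.le.trans hcb⟩ (hlt x hx.1 hx.2)).2.2
    refine h1_integrable (hpmono hIcoSub) (hip.mono_set hIcoSub)
      (hpyco.aestronglyMeasurable measurableSet_Ico) (C := M) ?_
    filter_upwards [ae_restrict_mem measurableSet_Ico] with w hw using (hM w hw).2
  -- b ∈ A
  have hbA : b ∈ A := by
    by_contra hbA
    have hcbne : c < b := lt_of_le_of_ne hcb fun h => hbA (h ▸ hcA)
    have hnot : ∀ x, c < x → x ≤ b →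
        ¬ IntegrableOn (fun w => py w / p w) (Icc a x) := by
      intro x hcx hxb hint
      exact absurd (le_csSup hbddA (⟨⟨hac.trans hcx.le, hxb⟩, hint⟩ : x ∈ A))
        (not_le.mpr hcx)
    have hyconst : ∀ x, c < x → x ≤ b → y x = y a := by
      intro x hcx hxb
      have h1 := hsol.1 x ⟨hac.trans hcx.le, hxb⟩
      rw [intervalIntegral.integral_of_le (hac.trans hcx.le)] at h1
      rw [h1, MeasureTheory.integral_undef, add_zero]
      intro hint
      exact hnot x hcx hxb ((integrableOn_Icc_iff_integrableOn_Ioc).mpr hint)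
    obtain ⟨hycc, h2cc, hpycc⟩ := cont_of c hcI hcA.2
    obtain ⟨C₁, hC₁⟩ := isCompact_Icc.exists_bound_of_continuousOn hycc
    have hC₁' : ∀ x ∈ Icc a b, |y x| ≤ C₁ := by
      intro x hx
      rcases le_or_gt x c with h | h
      · exact hC₁ x ⟨hx.1, h⟩
      · rw [hyconst x h hx.2]; exact hC₁ a (left_mem_Icc.mpr hac)
    have hunion : Icc a c ∪ Ioc c b = Icc a b := Icc_union_Ioc_eq_Icc hac hcb
    have hdisj : Disjoint (Icc a c) (Ioc c b) := by
      rw [Set.disjoint_left]; intro w h1 h2; exact absurd h1.2 (not_le.mpr h2.1)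
    have hyaesm : AEStronglyMeasurable y (volume.restrict (Icc a b)) := by
      rw [← hunion, Measure.restrict_union hdisj measurableSet_Ioc,
        aestronglyMeasurable_add_measure_iff]
      constructor
      · exact hycc.aestronglyMeasurable measurableSet_Icc
      · refine (aestronglyMeasurable_const (b := y a)).congr ?_
        filter_upwards [ae_restrict_mem measurableSet_Ioc] with w hw
        exact (hyconst w hw.1 hw.2).symm
    have h2int : IntegrableOn (fun w => q w * y w - l * r w * y w) (Icc a b) := by
      refine h2_integrable l hq hr hyaesm (C := C₁) ?_
      filter_upwards [ae_restrict_mem measurableSet_Icc] with w hw using hC₁' w hw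
    have hpycb : ContinuousOn py (Icc a b) := contOn_primitive_eq h2int hsol.2
    obtain ⟨C₂, hC₂⟩ := isCompact_Icc.exists_bound_of_continuousOn hpycb
    have hfin : IntegrableOn (fun w => py w / p w) (Icc a b) := by
      refine h1_integrable hp hip (hpycb.aestronglyMeasurable measurableSet_Icc)
        (C := C₂) ?_
      filter_upwards [ae_restrict_mem measurableSet_Icc] with w hw using hC₂ w hw
    exact hbA ⟨right_mem_Icc.mpr hab, hfin⟩
  obtain ⟨hyc, h2int, hpyc⟩ := cont_of b (right_mem_Icc.mpr hab) hbA.2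
  exact ⟨hbA.2, h2int, hyc, hpyc⟩

lemma sign_const {f : ℝ → ℝ} {x₁ x₂ a b : ℝ} (h : x₁ < x₂)
    (hsub : Icc x₁ x₂ ⊆ Icc a b)
    (hf : ContinuousOn f (Icc a b)) (hne : ∀ x ∈ Ioo x₁ x₂, f x ≠ 0) :
    (∀ x ∈ Ioo x₁ x₂, 0 < f x) ∨ (∀ x ∈ Ioo x₁ x₂, f x < 0) := by
  by_contra hcon
  push_neg at hcon
  obtain ⟨⟨t₁, ht₁, ht₁'⟩, ⟨t₂, ht₂, ht₂'⟩⟩ := hcon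
  have hlt₁ : f t₁ < 0 := lt_of_le_of_ne ht₁' (hne t₁ ht₁)
  have hlt₂ : 0 < f t₂ := lt_of_le_of_ne ht₂' (Ne.symm (hne t₂ ht₂))
  have hcont : ContinuousOn f (uIcc t₁ t₂) :=
    hf.mono ((ordConnected_Ioo.uIcc_subset ht₁ ht₂).trans
      ((Ioo_subset_Icc_self).trans hsub))
  have h0 : (0:ℝ) ∈ uIcc (f t₁) (f t₂) := by
    rw [Set.mem_uIcc]
    left; exact ⟨hlt₁.le, hlt₂.le⟩
  obtain ⟨w, hw, hfw⟩ := intermediate_value_uIcc hcont h0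
  exact hne w (ordConnected_Ioo.uIcc_subset ht₁ ht₂ hw) hfw

lemma endpoint_nonneg {z : ℝ → ℝ} {a b x₁ x₂ w : ℝ} (hzc : ContinuousOn z (Icc a b))
    (hsub : Ioo x₁ x₂ ⊆ Icc a b) (hw : w ∈ Icc a b) (h₁₂ : x₁ < x₂)
    (hwI : w ∈ Icc x₁ x₂) (hzpos : ∀ x ∈ Ioo x₁ x₂, 0 < z x) : 0 ≤ z w := by
  have hne : (nhdsWithin w (Ioo x₁ x₂)).NeBot := by
    rw [← mem_closure_iff_nhdsWithin_neBot, closure_Ioo h₁₂.ne]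
    exact hwI
  have hT : Filter.Tendsto z (nhdsWithin w (Ioo x₁ x₂)) (nhds (z w)) :=
    (hzc w hw).mono_left (nhdsWithin_mono _ hsub)
  exact ge_of_tendsto hT (eventually_mem_nhdsWithin.mono fun x hx => (hzpos x hx).le)

lemma left_sign {p u pu : ℝ → ℝ} {a b x₁ x₂ : ℝ}
    (hp : ∀ᵐ x ∂(volume.restrict (Icc a b)), 0 < p x)
    (hip : IntegrableOn (fun x => (p x)⁻¹) (Icc a b))
    (h1int : IntegrableOn (fun t => pu t / p t) (Icc a b))
    (hpuc : ContinuousOn pu (Icc a b))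
    (hx₁ : x₁ ∈ Icc a b) (hx₂ : x₂ ∈ Icc a b) (h₁₂ : x₁ < x₂)
    (hueq : ∀ x ∈ Icc x₁ x₂, u x = u x₁ + ∫ t in Ioc x₁ x, pu t / p t)
    (hu₁ : u x₁ = 0) (hupos : ∀ x ∈ Ioo x₁ x₂, 0 < u x) :
    0 ≤ pu x₁ := by
  by_contra hneg
  push_neg at hneg
  have hc := hpuc x₁ hx₁
  rw [Metric.continuousWithinAt_iff] at hc
  obtain ⟨δ, hδ0, hδ⟩ := hc (-pu x₁ / 2) (by linarith)
  set x : ℝ := min (x₁ + δ/2) ((x₁ + x₂)/2) with hxdef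
  have hx₁x : x₁ < x := by
    apply lt_min <;> [linarith; linarith]
  have hxx₂ : x < x₂ := by
    calc x ≤ (x₁ + x₂)/2 := min_le_right _ _
    _ < x₂ := by linarith
  have hxIoo : x ∈ Ioo x₁ x₂ := ⟨hx₁x, hxx₂⟩
  have hIocsub : Ioc x₁ x ⊆ Icc a b := fun w hw =>
    ⟨hx₁.1.trans hw.1.le, (hw.2.trans hxx₂.le).trans hx₂.2⟩
  have hbound : ∀ τ ∈ Ioc x₁ x, pu τ ≤ pu x₁ / 2 := by
    intro τ hτ
    have hd : dist τ x₁ < δ := by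
      rw [Real.dist_eq, abs_of_pos (by linarith [hτ.1] : (0:ℝ) < τ - x₁)]
      have : τ ≤ x := hτ.2
      have : x ≤ x₁ + δ/2 := min_le_left _ _
      linarith
    have := hδ (hIocsub hτ) hd
    rw [Real.dist_eq] at this
    have := abs_lt.mp this
    linarith [this.2]
  have hppos : ∀ᵐ τ ∂(volume.restrict (Ioc x₁ x)), 0 < p τ :=
    ae_restrict_of_ae_restrict_of_subset hIocsub hp
  have hmono : (∫ τ in Ioc x₁ x, pu τ / p τ)
      ≤ ∫ τ in Ioc x₁ x, (pu x₁ / 2) * (p τ)⁻¹ := by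
    refine integral_mono_ae (h1int.mono_set hIocsub)
      ((hip.mono_set hIocsub).const_mul _) ?_
    filter_upwards [hppos, ae_restrict_mem measurableSet_Ioc] with τ h0 hτ
    rw [div_eq_mul_inv]
    exact mul_le_mul_of_nonneg_right (hbound τ hτ) (inv_nonneg.mpr h0.le)
  rw [MeasureTheory.integral_const_mul] at hmono
  have hipos : 0 < ∫ τ in Ioc x₁ x, (p τ)⁻¹ := by
    refine setIntegral_pos_of_ae_pos ?_ ?_ (hip.mono_set hIocsub)
    · rw [Real.volume_Ioc]
      exact ENNReal.ofReal_pos.mpr (by linarith)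
    · filter_upwards [hppos] with τ h0 using inv_pos.mpr h0
  have hux := hueq x ⟨hx₁x.le, hxx₂.le⟩
  have : u x < 0 := by
    rw [hux, hu₁, zero_add]
    calc (∫ τ in Ioc x₁ x, pu τ / p τ) ≤ pu x₁ / 2 * ∫ τ in Ioc x₁ x, (p τ)⁻¹ := hmono
    _ < 0 := mul_neg_of_neg_of_pos (by linarith) hipos
  exact absurd (hupos x hxIoo) (not_lt.mpr this.le)

lemma right_sign {p u pu : ℝ → ℝ} {a b x₁ x₂ : ℝ}
    (hp : ∀ᵐ x ∂(volume.restrict (Icc a b)), 0 < p x)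
    (hip : IntegrableOn (fun x => (p x)⁻¹) (Icc a b))
    (h1int : IntegrableOn (fun t => pu t / p t) (Icc a b))
    (hpuc : ContinuousOn pu (Icc a b))
    (hx₁ : x₁ ∈ Icc a b) (hx₂ : x₂ ∈ Icc a b) (h₁₂ : x₁ < x₂)
    (hueq : ∀ x ∈ Icc x₁ x₂, u x = u x₁ + ∫ t in Ioc x₁ x, pu t / p t)
    (hu₂ : u x₂ = 0) (hupos : ∀ x ∈ Ioo x₁ x₂, 0 < u x) :
    pu x₂ ≤ 0 := by
  by_contra hneg
  push_neg at hneg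
  have hc := hpuc x₂ hx₂
  rw [Metric.continuousWithinAt_iff] at hc
  obtain ⟨δ, hδ0, hδ⟩ := hc (pu x₂ / 2) (by linarith)
  set x : ℝ := max (x₂ - δ/2) ((x₁ + x₂)/2) with hxdef
  have hx₁x : x₁ < x := by
    calc x₁ < (x₁ + x₂)/2 := by linarith
    _ ≤ x := le_max_right _ _
  have hxx₂ : x < x₂ := by
    apply max_lt <;> [linarith; linarith]
  have hxIoo : x ∈ Ioo x₁ x₂ := ⟨hx₁x, hxx₂⟩
  have hIocsub : Ioc x x₂ ⊆ Icc a b := fun w hw =>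
    ⟨hx₁.1.trans (hx₁x.trans hw.1).le, hw.2.trans hx₂.2⟩
  have hbound : ∀ τ ∈ Ioc x x₂, pu x₂ / 2 ≤ pu τ := by
    intro τ hτ
    have hd : dist τ x₂ < δ := by
      rw [Real.dist_eq, abs_of_nonpos (by linarith [hτ.2] : τ - x₂ ≤ 0)]
      have h1 : x ≤ τ := hτ.1.le
      have h2 : x₂ - δ/2 ≤ x := le_max_left _ _
      linarith
    have := hδ (hIocsub hτ) hd
    rw [Real.dist_eq] at this
    have := abs_lt.mp this
    linarith [this.1]
  have hppos : ∀ᵐ τ ∂(volume.restrict (Ioc x x₂)), 0 < p τ :=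
    ae_restrict_of_ae_restrict_of_subset hIocsub hp
  have hmono : (∫ τ in Ioc x x₂, (pu x₂ / 2) * (p τ)⁻¹)
      ≤ ∫ τ in Ioc x x₂, pu τ / p τ := by
    refine integral_mono_ae ((hip.mono_set hIocsub).const_mul _)
      (h1int.mono_set hIocsub) ?_
    filter_upwards [hppos, ae_restrict_mem measurableSet_Ioc] with τ h0 hτ
    rw [div_eq_mul_inv]
    exact mul_le_mul_of_nonneg_right (hbound τ hτ) (inv_nonneg.mpr h0.le)
  rw [MeasureTheory.integral_const_mul] at hmono
  have hipos : 0 < ∫ τ in Ioc x x₂, (p τ)⁻¹ := by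
    refine setIntegral_pos_of_ae_pos ?_ ?_ (hip.mono_set hIocsub)
    · rw [Real.volume_Ioc]
      exact ENNReal.ofReal_pos.mpr (by linarith)
    · filter_upwards [hppos] with τ h0 using inv_pos.mpr h0
  -- u x = u x₂ - ∫_{Ioc x x₂}
  have hsplit : (∫ τ in Ioc x₁ x₂, pu τ / p τ)
      = (∫ τ in Ioc x₁ x, pu τ / p τ) + ∫ τ in Ioc x x₂, pu τ / p τ := by
    rw [← setIntegral_union (Set.Ioc_disjoint_Ioc_of_le le_rfl) measurableSet_Ioc
      (h1int.mono_set (fun w hw => ⟨hx₁.1.trans hw.1.le, (hw.2.trans hxx₂.le).trans hx₂.2⟩))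
      (h1int.mono_set hIocsub),
      Set.Ioc_union_Ioc_eq_Ioc hx₁x.le hxx₂.le]
  have hux := hueq x ⟨hx₁x.le, hxx₂.le⟩
  have hux₂ := hueq x₂ ⟨h₁₂.le, le_rfl⟩
  have : u x < 0 := by
    have hpos : 0 < ∫ τ in Ioc x x₂, pu τ / p τ :=
      lt_of_lt_of_le (mul_pos (by linarith) hipos) hmono
    have : u x = u x₂ - ∫ τ in Ioc x x₂, pu τ / p τ := by
      rw [hux, hux₂, hsplit]; ring
    rw [this, hu₂]; linarith
  exact absurd (hupos x hxIoo) (not_lt.mpr this.le)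

lemma key_contradiction {p q r : ℝ → ℝ} {a b : ℝ}
    (hp : ∀ᵐ x ∂(volume.restrict (Set.Icc a b)), 0 < p x)
    (hq : IntegrableOn q (Set.Icc a b))
    (hr : IntegrableOn r (Set.Icc a b))
    (hip : IntegrableOn (fun x => (p x)⁻¹) (Set.Icc a b))
    (hrpos : ∀ᵐ x ∂(volume.restrict (Set.Icc a b)), 0 ≤ r x)
    {l m : ℝ} (hlm : l < m)
    {u pu z pz : ℝ → ℝ}
    (hsolu : IsRealSLSolution p q r a b l u pu)
    (hsolz : IsRealSLSolution p q r a b m z pz)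
    {x₁ x₂ : ℝ} (hx₁ : x₁ ∈ Set.Icc a b) (hx₂ : x₂ ∈ Set.Icc a b) (h₁₂ : x₁ < x₂)
    (hu₁ : u x₁ = 0) (hu₂ : u x₂ = 0)
    (hupos : ∀ x ∈ Set.Ioo x₁ x₂, 0 < u x)
    (hzpos : ∀ x ∈ Set.Ioo x₁ x₂, 0 < z x)
    (hrx : ¬ (∀ᵐ x ∂(volume.restrict (Set.Ioo x₁ x₂)), r x = 0)) : False := by
  have hab' : a ≤ b := hx₁.1.trans (h₁₂.le.trans hx₂.2)
  obtain ⟨hI1u, hI2u, hyu, hpyu⟩ := sl_regularity hab' hp hq hr hip hsolu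
  obtain ⟨hI1z, hI2z, hyz, hpyz⟩ := sl_regularity hab' hp hq hr hip hsolz
  have hIccsub : Icc x₁ x₂ ⊆ Icc a b := Icc_subset_Icc hx₁.1 hx₂.2
  have hIocsub : Ioc x₁ x₂ ⊆ Icc a b := Ioc_subset_Icc_self.trans hIccsub
  have hIoosub : Ioo x₁ x₂ ⊆ Icc a b := Ioo_subset_Icc_self.trans hIccsub
  -- base-point shift
  have hbase : ∀ (Y f : ℝ → ℝ), IntegrableOn f (Icc a b) →
      (∀ x ∈ Icc a b, Y x = Y a + ∫ t in a..x, f t) →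
      ∀ x ∈ Icc x₁ x₂, Y x = Y x₁ + ∫ t in Ioc x₁ x, f t := by
    intro Y f hf hY x hx
    have II : ∀ w ∈ Icc a b, IntervalIntegrable f volume a w := fun w hw =>
      (intervalIntegrable_iff_integrableOn_Ioc_of_le hw.1).mpr
        (hf.mono_set (fun z hz => ⟨hz.1.le, hz.2.trans hw.2⟩))
    have h1 := hY x (hIccsub hx)
    have h2 := hY x₁ hx₁
    have h3 := intervalIntegral.integral_interval_sub_left (II x (hIccsub hx)) (II x₁ hx₁)
    have h4 := intervalIntegral.integral_of_le (f := f) (μ := volume) hx.1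
    rw [h1, h2]; linarith
  have hueq := hbase u (fun t => pu t / p t) hI1u hsolu.1
  have hpueq := hbase pu (fun t => q t * u t - l * r t * u t) hI2u hsolu.2
  have hzeq := hbase z (fun t => pz t / p t) hI1z hsolz.1
  have hpzeq := hbase pz (fun t => q t * z t - m * r t * z t) hI2z hsolz.2
  -- endpoint signs
  have hz₁ : 0 ≤ z x₁ := endpoint_nonneg hyz hIoosub hx₁ h₁₂ (left_mem_Icc.mpr h₁₂.le) hzpos
  have hz₂ : 0 ≤ z x₂ := endpoint_nonneg hyz hIoosub hx₂ h₁₂ (right_mem_Icc.mpr h₁₂.le) hzpos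
  have hpu₁ : 0 ≤ pu x₁ := left_sign hp hip hI1u hpyu hx₁ hx₂ h₁₂ hueq hu₁ hupos
  have hpu₂ : pu x₂ ≤ 0 := right_sign hp hip hI1u hpyu hx₁ hx₂ h₁₂ hueq hu₂ hupos
  -- integration by parts
  have P1 := parts h₁₂.le (hI2u.mono_set hIccsub) (hI1z.mono_set hIccsub) hpueq hzeq
  have P2 := parts h₁₂.le (hI1u.mono_set hIccsub) (hI2z.mono_set hIccsub) hueq hpzeq
  have hcancel : (∫ t in Ioc x₁ x₂, pu t * (pz t / p t))
      = ∫ t in Ioc x₁ x₂, (pu t / p t) * pz t :=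
    setIntegral_congr_fun measurableSet_Ioc (fun t _ => by ring)
  -- bounds on u, z
  obtain ⟨Cu, hCu⟩ := isCompact_Icc.exists_bound_of_continuousOn hyu
  obtain ⟨Cz, hCz⟩ := isCompact_Icc.exists_bound_of_continuousOn hyz
  have huae : ∀ᵐ t ∂(volume.restrict (Ioc x₁ x₂)), |u t| ≤ Cu := by
    filter_upwards [ae_restrict_mem measurableSet_Ioc] with t ht using hCu t (hIocsub ht)
  have hzae : ∀ᵐ t ∂(volume.restrict (Ioc x₁ x₂)), |z t| ≤ Cz := by
    filter_upwards [ae_restrict_mem measurableSet_Ioc] with t ht using hCz t (hIocsub ht)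
  have huMeas : AEStronglyMeasurable u (volume.restrict (Ioc x₁ x₂)) :=
    (hyu.aestronglyMeasurable measurableSet_Icc).mono_measure
      (Measure.restrict_mono hIocsub le_rfl)
  have hzMeas : AEStronglyMeasurable z (volume.restrict (Ioc x₁ x₂)) :=
    (hyz.aestronglyMeasurable measurableSet_Icc).mono_measure
      (Measure.restrict_mono hIocsub le_rfl)
  have hintA : IntegrableOn (fun t => (q t * u t - l * r t * u t) * z t) (Ioc x₁ x₂) :=
    integrableOn_mul_of_bdd (hI2u.mono_set hIocsub) hzMeas hzae
  have hintB : IntegrableOn (fun t => u t * (q t * z t - m * r t * z t)) (Ioc x₁ x₂) := by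
    refine (integrableOn_mul_of_bdd (hI2z.mono_set hIocsub) huMeas huae).congr ?_
    exact Filter.Eventually.of_forall fun t => mul_comm _ _
  have hsubint := MeasureTheory.integral_sub hintA hintB
  have hWeq : pu x₂ * z x₂ - pu x₁ * z x₁
      = ∫ t in Ioc x₁ x₂,
          ((q t * u t - l * r t * u t) * z t - u t * (q t * z t - m * r t * z t)) := by
    rw [hu₁, hu₂] at P2
    linarith [P1, P2, hcancel, hsubint]
  have hfinal : pu x₂ * z x₂ - pu x₁ * z x₁
      = ∫ t in Ioc x₁ x₂, (m - l) * (r t * (u t * z t)) :=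
    hWeq.trans (setIntegral_congr_fun measurableSet_Ioc fun t _ => by ring)
  -- integrability of the final integrand
  have hru : IntegrableOn (fun t => r t * u t) (Ioc x₁ x₂) :=
    integrableOn_mul_of_bdd (hr.mono_set hIocsub) huMeas huae
  have hruz : IntegrableOn (fun t => r t * u t * z t) (Ioc x₁ x₂) :=
    integrableOn_mul_of_bdd hru hzMeas hzae
  have hint : IntegrableOn (fun t => (m - l) * (r t * (u t * z t))) (Ioc x₁ x₂) := by
    refine (hruz.const_mul (m - l)).congr ?_
    exact Filter.Eventually.of_forall fun t => by ring
  -- a.e. nonnegativity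
  have hrpos' : ∀ᵐ t ∂(volume.restrict (Ioc x₁ x₂)), 0 ≤ r t :=
    ae_restrict_of_ae_restrict_of_subset hIocsub hrpos
  have hu_nonneg : ∀ t ∈ Ioc x₁ x₂, 0 ≤ u t := by
    intro t ht
    rcases eq_or_lt_of_le ht.2 with h | h
    · rw [h, hu₂]
    · exact (hupos t ⟨ht.1, h⟩).le
  have hz_nonneg : ∀ t ∈ Ioc x₁ x₂, 0 ≤ z t := by
    intro t ht
    rcases eq_or_lt_of_le ht.2 with h | h
    · rw [h]; exact hz₂
    · exact (hzpos t ⟨ht.1, h⟩).le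
  have hnonneg : ∀ᵐ t ∂(volume.restrict (Ioc x₁ x₂)),
      0 ≤ (m - l) * (r t * (u t * z t)) := by
    filter_upwards [hrpos', ae_restrict_mem measurableSet_Ioc] with t h0 ht
    have := hu_nonneg t ht
    have := hz_nonneg t ht
    have : (0:ℝ) ≤ u t * z t := mul_nonneg ‹0 ≤ u t› ‹0 ≤ z t›
    exact mul_nonneg (by linarith) (mul_nonneg h0 this)
  have hI0 : 0 ≤ ∫ t in Ioc x₁ x₂, (m - l) * (r t * (u t * z t)) :=
    setIntegral_nonneg_of_ae_restrict hnonneg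
  have hIne : (∫ t in Ioc x₁ x₂, (m - l) * (r t * (u t * z t))) ≠ 0 := by
    intro h0
    have hz0 := (setIntegral_eq_zero_iff_of_nonneg_ae hnonneg hint).mp h0
    apply hrx
    have hz0' := ae_restrict_of_ae_restrict_of_subset
      (Ioo_subset_Ioc_self : Ioo x₁ x₂ ⊆ Ioc x₁ x₂) hz0
    filter_upwards [hz0', ae_restrict_mem measurableSet_Ioo] with t h1 ht
    have hut := hupos t ht
    have hzt := hzpos t ht
    have h1' : (m - l) * (r t * (u t * z t)) = 0 := h1
    rcases mul_eq_zero.mp h1' with h | h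
    · exact absurd h (by linarith)
    rcases mul_eq_zero.mp h with h | h
    · exact h
    · exact absurd h (by positivity)
  have hIpos : 0 < ∫ t in Ioc x₁ x₂, (m - l) * (r t * (u t * z t)) :=
    lt_of_le_of_ne hI0 (Ne.symm hIne)
  nlinarith [mul_nonneg hpu₁ hz₁, mul_nonneg (neg_nonneg.mpr hpu₂) hz₂, hfinal, hIpos]

/-- Sturm comparison: with `r ≥ 0` a.e. and `λ < μ`, between consecutive zeros
`x₁ < x₂` of `u` (with `r` not a.e. zero there) the solution `z` for `μ` must vanish. -/
theorem sturm_comparison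
    (p q r : ℝ → ℝ) (a b : ℝ) (hab : a < b)
    (hp : ∀ᵐ x ∂(volume.restrict (Set.Icc a b)), 0 < p x)
    (hq : IntegrableOn q (Set.Icc a b))
    (hr : IntegrableOn r (Set.Icc a b))
    (hip : IntegrableOn (fun x => (p x)⁻¹) (Set.Icc a b))
    (hrpos : ∀ᵐ x ∂(volume.restrict (Set.Icc a b)), 0 ≤ r x)
    (hrint : 0 < ∫ x in a..b, r x)
    (l m : ℝ) (hlm : l < m)
    (u pu z pz : ℝ → ℝ)
    (hsolu : IsRealSLSolution p q r a b l u pu)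
    (hsolz : IsRealSLSolution p q r a b m z pz)
    (hntu : ∃ x ∈ Set.Icc a b, u x ≠ 0)
    (hntz : ∃ x ∈ Set.Icc a b, z x ≠ 0)
    (x₁ x₂ : ℝ) (hx₁ : x₁ ∈ Set.Icc a b) (hx₂ : x₂ ∈ Set.Icc a b) (h₁₂ : x₁ < x₂)
    (hu₁ : u x₁ = 0) (hu₂ : u x₂ = 0)
    -- x₁, x₂ are consecutive zeros of u :
    (hconsec : ∀ x ∈ Set.Ioo x₁ x₂, u x ≠ 0)
    -- r is not a.e. zero on (x₁, x₂) :
    (hrx : ¬ (∀ᵐ x ∂(volume.restrict (Set.Ioo x₁ x₂)), r x = 0)) :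
    ∃ x ∈ Set.Ioo x₁ x₂, z x = 0 := by
  by_contra hcon
  push_neg at hcon
  have hab' : a ≤ b := hab.le
  obtain ⟨_, _, hyu, _⟩ := sl_regularity hab' hp hq hr hip hsolu
  obtain ⟨_, _, hyz, _⟩ := sl_regularity hab' hp hq hr hip hsolz
  have hIccsub : Icc x₁ x₂ ⊆ Icc a b := Icc_subset_Icc hx₁.1 hx₂.2
  have hneg : ∀ {ll : ℝ} {Y PY : ℝ → ℝ}, IsRealSLSolution p q r a b ll Y PY →
      IsRealSLSolution p q r a b ll (fun x => -Y x) (fun x => -PY x) := by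
    intro ll Y PY hsol
    constructor
    · intro x hx
      have h := hsol.1 x hx
      simp only [neg_div, intervalIntegral.integral_neg]
      linarith
    · intro x hx
      have h := hsol.2 x hx
      have : (∫ t in a..x, (q t * -Y t - ll * r t * -Y t))
          = -∫ t in a..x, (q t * Y t - ll * r t * Y t) := by
        rw [← intervalIntegral.integral_neg]
        congr 1; funext t; ring
      rw [this]
      dsimp only
      linarith
  rcases sign_const h₁₂ hIccsub hyu hconsec with hupos | huneg
  · rcases sign_const h₁₂ hIccsub hyz hcon with hzpos | hzneg
    · exact absurd (key_contradiction hp hq hr hip hrpos hlm hsolu hsolz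
        hx₁ hx₂ h₁₂ hu₁ hu₂ hupos hzpos hrx) not_false
    · refine absurd (key_contradiction hp hq hr hip hrpos hlm hsolu (hneg hsolz)
        hx₁ hx₂ h₁₂ hu₁ hu₂ hupos (fun x hx => ?_) hrx) not_false
      simpa using (hzneg x hx)
  · rcases sign_const h₁₂ hIccsub hyz hcon with hzpos | hzneg
    · refine absurd (key_contradiction hp hq hr hip hrpos hlm (hneg hsolu) hsolz
        hx₁ hx₂ h₁₂ (by simpa using hu₁) (by simpa using hu₂) (fun x hx => ?_) hzpos hrx)
        not_false
      simpa using (huneg x hx)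
    · refine absurd (key_contradiction hp hq hr hip hrpos hlm (hneg hsolu) (hneg hsolz)
        hx₁ hx₂ h₁₂ (by simpa using hu₁) (by simpa using hu₂) (fun x hx => ?_)
        (fun x hx => ?_) hrx) not_false
      · simpa using (huneg x hx)
      · simpa using (hzneg x hx)
end

section
/- Consider the Dirichlet problem -y'' + q y = λ r y on [0,2] with q ≡ -9π²/16, r(x) = 1 on [0,1], r(x) = -1 on (1,2]. Then λ = iμ is an eigenvalue for some real μ ≠ 0; i.e., this non-definite problem admits a purely imaginary eigenvalue. -/
open MeasureTheory Real

lemma ivt_step : ∃ β : ℝ, 0 < β ∧ β ≤ 1 ∧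
    Real.sqrt (9*π^2/16 + β^2) * Real.sin (2 * Real.sqrt (9*π^2/16 + β^2))
      + β * Real.sinh (2*β) = 0 := by
  set f : ℝ → ℝ := fun β => Real.sqrt (9*π^2/16 + β^2) * Real.sin (2 * Real.sqrt (9*π^2/16 + β^2))
      + β * Real.sinh (2*β) with hf
  have hcont : ContinuousOn f (Set.Icc 0 1) := by
    apply Continuous.continuousOn
    fun_prop
  have hf0 : f 0 < 0 := by
    have h34 : Real.sqrt (9*π^2/16 + 0^2) = 3*π/4 := by
      rw [show (9*π^2/16 + 0^2 : ℝ) = (3*π/4)^2 by ring]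
      exact Real.sqrt_sq (by positivity)
    have h0 : f 0 = Real.sqrt (9*π^2/16 + 0^2) * Real.sin (2 * Real.sqrt (9*π^2/16 + 0^2))
        + 0 * Real.sinh (2*0) := rfl
    rw [h0, h34, show (2 * (3*π/4) : ℝ) = π + π/2 by ring, Real.sin_add, Real.sin_pi,
      Real.cos_pi, Real.sin_pi_div_two, Real.cos_pi_div_two]
    nlinarith [Real.pi_pos]
  have hf1 : 0 < f 1 := by
    have hπ : π < 3.15 := Real.pi_lt_d2
    have hπ0 : 0 < π := Real.pi_pos
    have hα : Real.sqrt (9*π^2/16 + 1^2) < 2.7 := by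
      rw [show (2.7:ℝ) = Real.sqrt (2.7^2) from (Real.sqrt_sq (by norm_num)).symm]
      apply Real.sqrt_lt_sqrt (by positivity)
      nlinarith
    have hαnn : 0 ≤ Real.sqrt (9*π^2/16 + 1^2) := Real.sqrt_nonneg _
    have hsinh : (2.8:ℝ) < Real.sinh 2 := by
      rw [Real.sinh_eq]
      have h1 : (2.7182818283:ℝ) < Real.exp 1 := Real.exp_one_gt_d9
      have h2 : Real.exp 2 = Real.exp 1 * Real.exp 1 := by
        rw [← Real.exp_add]; norm_num
      have h3 : Real.exp (-2) < 1 := Real.exp_lt_one_iff.mpr (by norm_num)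
      nlinarith
    have hsin : -1 ≤ Real.sin (2 * Real.sqrt (9*π^2/16 + 1^2)) := Real.neg_one_le_sin _
    have : f 1 = Real.sqrt (9*π^2/16 + 1^2) * Real.sin (2 * Real.sqrt (9*π^2/16 + 1^2))
        + 1 * Real.sinh (2*1) := rfl
    rw [this]
    nlinarith
  have hmem : (0:ℝ) ∈ Set.Icc (f 0) (f 1) := ⟨hf0.le, hf1.le⟩
  obtain ⟨β, hβmem, hβ⟩ := intermediate_value_Icc (by norm_num : (0:ℝ) ≤ 1) hcont hmem
  refine ⟨β, ?_, hβmem.2, hβ⟩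
  rcases lt_or_eq_of_le hβmem.1 with h | h
  · exact h
  · exfalso; rw [← h] at hβ; rw [hβ] at hf0; exact lt_irrefl 0 hf0


lemma hdSin (c d : ℂ) (t : ℝ) :
    HasDerivAt (fun s : ℝ => Complex.sin (c * s + d)) (c * Complex.cos (c * t + d)) t := by
  have h1 : HasDerivAt (fun z : ℂ => Complex.sin (c * z + d))
      (c * Complex.cos (c * (t:ℂ) + d)) (t:ℂ) := by
    refine ((Complex.hasDerivAt_sin (c * (t:ℂ) + d)).comp (t:ℂ)
      (((hasDerivAt_id (t:ℂ)).const_mul c).add_const d)).congr_deriv ?_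
    ring
  exact h1.comp_ofReal

lemma hdCos (c d : ℂ) (t : ℝ) :
    HasDerivAt (fun s : ℝ => Complex.cos (c * s + d)) (-(c * Complex.sin (c * t + d))) t := by
  have h1 : HasDerivAt (fun z : ℂ => Complex.cos (c * z + d))
      (-(c * Complex.sin (c * (t:ℂ) + d))) (t:ℂ) := by
    refine ((Complex.hasDerivAt_cos (c * (t:ℂ) + d)).comp (t:ℂ)
      (((hasDerivAt_id (t:ℂ)).const_mul c).add_const d)).congr_deriv ?_
    ring
  exact h1.comp_ofReal

lemma sinMulCos (x y : ℂ) : Complex.sin x * Complex.cos y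
    = (Complex.sin (x+y) + Complex.sin (x-y))/2 := by
  rw [Complex.sin_add, Complex.sin_sub]; ring

lemma cosMulSin (x y : ℂ) : Complex.cos x * Complex.sin y
    = (Complex.sin (x+y) - Complex.sin (x-y))/2 := by
  rw [Complex.sin_add, Complex.sin_sub]; ring

lemma mingarelli_aux (α β : ℝ) (hα : 0 < α) (hβ : 0 < β)
    (hab : α^2 = 9*π^2/16 + β^2)
    (hD : α * Real.sin (2*α) + β * Real.sinh (2*β) = 0) :
    ∃ μ : ℝ, μ ≠ 0 ∧
      ∃ y yd : ℝ → ℂ,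
        (∀ x ∈ Set.Icc (0:ℝ) 2, y x = y 0 + ∫ t in (0:ℝ)..x, yd t) ∧
        (∀ x ∈ Set.Icc (0:ℝ) 2, yd x = yd 0 + ∫ t in (0:ℝ)..x,
          (((-9 * π ^ 2 / 16 : ℝ) : ℂ) * y t -
            Complex.I * (μ : ℂ) * ((if t ≤ 1 then (1:ℝ) else -1) : ℂ) * y t)) ∧
        (∃ x ∈ Set.Icc (0:ℝ) 2, y x ≠ 0) ∧
        y 0 = 0 ∧ y 2 = 0 := by
  set ω : ℂ := (α:ℂ) + (β:ℂ)*Complex.I with hωd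
  set ϖ : ℂ := (α:ℂ) - (β:ℂ)*Complex.I with hϖd
  have hc : ((α:ℂ))^2 = ((9:ℂ)*(π:ℂ)^2/16) + (β:ℂ)^2 := by exact_mod_cast congrArg (Complex.ofReal) hab
  have hω2 : ω^2 = ((9*π^2/16:ℝ):ℂ) + ((2*α*β:ℝ):ℂ)*Complex.I := by
    rw [hωd]; push_cast
    linear_combination hc + (β:ℂ)^2 * Complex.I_sq
  have hϖ2 : ϖ^2 = ((9*π^2/16:ℝ):ℂ) - ((2*α*β:ℝ):ℂ)*Complex.I := by
    rw [hϖd]; push_cast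
    linear_combination hc + (β:ℂ)^2 * Complex.I_sq
  have hϖ0 : ϖ ≠ 0 := by
    rw [hϖd]; intro h
    have h2 := congrArg Complex.im h
    simp at h2
    exact hβ.ne' h2
  have hsinω : Complex.sin ω ≠ 0 := by
    intro h
    rw [Complex.sin_eq_zero_iff] at h
    obtain ⟨k, hk⟩ := h
    have h2 := congrArg Complex.im hk
    rw [hωd] at h2
    simp at h2
    exact hβ.ne' h2
  -- the pieces
  set p1 : ℝ → ℂ := fun x => Complex.sin (ω*x) with hp1d
  set p2 : ℝ → ℂ := fun x => Complex.sin ω * Complex.cos (ϖ*x - ϖ)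
      + ω * Complex.cos ω / ϖ * Complex.sin (ϖ*x - ϖ) with hp2d
  set q1 : ℝ → ℂ := fun x => ω * Complex.cos (ω*x) with hq1d
  set q2 : ℝ → ℂ := fun x => -(ϖ * Complex.sin ω * Complex.sin (ϖ*x - ϖ))
      + ω * Complex.cos ω * Complex.cos (ϖ*x - ϖ) with hq2d
  set y : ℝ → ℂ := fun x => if x ≤ 1 then p1 x else p2 x with hyd'
  set yd : ℝ → ℂ := fun x => if x ≤ 1 then q1 x else q2 x with hydd
  -- derivatives
  have hder1 : ∀ t:ℝ, HasDerivAt p1 (q1 t) t := by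
    intro t
    have h := hdSin ω 0 t
    simp only [add_zero] at h
    exact h
  have hderq1 : ∀ t:ℝ, HasDerivAt q1 (-(ω^2) * p1 t) t := by
    intro t
    have h := (hdCos ω 0 t).const_mul ω
    simp only [add_zero] at h
    refine h.congr_deriv ?_
    rw [hp1d]; ring
  have hder2 : ∀ t:ℝ, HasDerivAt p2 (q2 t) t := by
    intro t
    have h1 := (hdCos ϖ (-ϖ) t).const_mul (Complex.sin ω)
    have h2 := (hdSin ϖ (-ϖ) t).const_mul (ω * Complex.cos ω / ϖ)
    have h := h1.add h2
    simp only [← sub_eq_add_neg] at h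
    refine h.congr_deriv ?_
    rw [hq2d]
    field_simp
  have hderq2 : ∀ t:ℝ, HasDerivAt q2 (-(ϖ^2) * p2 t) t := by
    intro t
    have h1 := ((hdSin ϖ (-ϖ) t).const_mul (ϖ * Complex.sin ω)).neg
    have h2 := (hdCos ϖ (-ϖ) t).const_mul (ω * Complex.cos ω)
    have h := h1.add h2
    simp only [← sub_eq_add_neg] at h
    refine h.congr_deriv ?_
    rw [hp2d]
    field_simp
    ring
  -- continuity
  have cp1 : Continuous p1 := by
    rw [hp1d]; fun_prop
  have cp2 : Continuous p2 := by
    rw [hp2d]; fun_prop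
  have cq1 : Continuous q1 := by
    rw [hq1d]; fun_prop
  have cq2 : Continuous q2 := by
    rw [hq2d]; fun_prop
  -- matching at endpoints
  have hp10 : p1 0 = 0 := by rw [hp1d]; simp
  have h11 : p1 1 = p2 1 := by rw [hp1d, hp2d]; simp
  have h11' : q1 1 = q2 1 := by rw [hq1d, hq2d]; simp
  have hy1 : ∀ t:ℝ, t ≤ 1 → y t = p1 t := fun t ht => if_pos ht
  have hy2 : ∀ t:ℝ, 1 ≤ t → y t = p2 t := by
    intro t ht
    rcases lt_or_eq_of_le ht with h | h
    · exact if_neg (not_le.mpr h)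
    · rw [← h]; rw [hy1 1 le_rfl, h11]
  have hz1 : ∀ t:ℝ, t ≤ 1 → yd t = q1 t := fun t ht => if_pos ht
  have hz2 : ∀ t:ℝ, 1 ≤ t → yd t = q2 t := by
    intro t ht
    rcases lt_or_eq_of_le ht with h | h
    · exact if_neg (not_le.mpr h)
    · rw [← h]; rw [hz1 1 le_rfl, h11']
  have hy0 : y 0 = 0 := by rw [hy1 0 (by norm_num), hp10]
  have hyd0 : yd 0 = ω := by rw [hz1 0 (by norm_num), hq1d]; simp
  refine ⟨2*α*β, by positivity, y, yd, ?_, ?_, ⟨1, by norm_num, ?_⟩, hy0, ?_⟩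
  · -- first integral identity
    intro x hx
    obtain ⟨hx0, hx2⟩ := hx
    by_cases hx1 : x ≤ 1
    · have e1 : ∫ t in (0:ℝ)..x, yd t = p1 x - p1 0 := by
        rw [intervalIntegral.integral_congr (g := q1) ?_]
        · exact intervalIntegral.integral_eq_sub_of_hasDerivAt (fun t _ => hder1 t)
            (cq1.intervalIntegrable 0 x)
        · rw [Set.uIcc_of_le hx0]
          intro t ht
          exact hz1 t (ht.2.trans hx1)
      rw [e1, hy0, hp10, hy1 x hx1]; ring
    · push_neg at hx1
      have i1 : IntervalIntegrable yd volume 0 1 :=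
        ((cq1.continuousOn).congr (by
          rw [Set.uIcc_of_le (by norm_num : (0:ℝ) ≤ 1)]
          intro t ht
          exact hz1 t ht.2)).intervalIntegrable
      have i2 : IntervalIntegrable yd volume 1 x :=
        ((cq2.continuousOn).congr (by
          rw [Set.uIcc_of_le hx1.le]
          intro t ht
          exact hz2 t ht.1)).intervalIntegrable
      rw [← intervalIntegral.integral_add_adjacent_intervals i1 i2]
      have e1 : ∫ t in (0:ℝ)..1, yd t = p1 1 - p1 0 := by
        rw [intervalIntegral.integral_congr (g := q1) ?_]
        · exact intervalIntegral.integral_eq_sub_of_hasDerivAt (fun t _ => hder1 t)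
            (cq1.intervalIntegrable 0 1)
        · rw [Set.uIcc_of_le (by norm_num : (0:ℝ) ≤ 1)]
          intro t ht
          exact hz1 t ht.2
      have e2 : ∫ t in (1:ℝ)..x, yd t = p2 x - p2 1 := by
        rw [intervalIntegral.integral_congr (g := q2) ?_]
        · exact intervalIntegral.integral_eq_sub_of_hasDerivAt (fun t _ => hder2 t)
            (cq2.intervalIntegrable 1 x)
        · rw [Set.uIcc_of_le hx1.le]
          intro t ht
          exact hz2 t ht.1
      rw [e1, e2, hy0, hp10, hy2 x hx1.le, h11]; ring
  · -- second integral identity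
    intro x hx
    obtain ⟨hx0, hx2⟩ := hx
    set F : ℝ → ℂ := fun t => ((-9 * π ^ 2 / 16 : ℝ) : ℂ) * y t -
        Complex.I * ((2*α*β : ℝ) : ℂ) * ((if t ≤ 1 then (1:ℝ) else -1) : ℂ) * y t with hFd
    show yd x = yd 0 + ∫ t in (0:ℝ)..x, F t
    have hF1 : ∀ t:ℝ, t ≤ 1 → F t = -(ω^2) * p1 t := by
      intro t ht
      rw [hFd]
      simp only [if_pos ht, hy1 t ht]
      have h := hω2
      push_cast at h ⊢
      linear_combination (p1 t) * h
    have hF2 : ∀ t:ℝ, 1 < t → F t = -(ϖ^2) * p2 t := by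
      intro t ht
      rw [hFd]
      simp only [if_neg (not_le.mpr ht), hy2 t ht.le]
      have h := hϖ2
      push_cast at h ⊢
      linear_combination (p2 t) * h
    by_cases hx1 : x ≤ 1
    · have e1 : ∫ t in (0:ℝ)..x, F t = q1 x - q1 0 := by
        rw [intervalIntegral.integral_congr (g := fun t => -(ω^2) * p1 t) ?_]
        · exact intervalIntegral.integral_eq_sub_of_hasDerivAt (fun t _ => hderq1 t)
            ((continuous_const.mul cp1).intervalIntegrable 0 x)
        · rw [Set.uIcc_of_le hx0]
          intro t ht
          exact hF1 t (ht.2.trans hx1)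
      rw [e1, hz1 x hx1, hz1 0 (by norm_num)]; ring
    · push_neg at hx1
      have i1 : IntervalIntegrable F volume 0 1 :=
        (((continuous_const.mul cp1).continuousOn).congr (by
          rw [Set.uIcc_of_le (by norm_num : (0:ℝ) ≤ 1)]
          intro t ht
          exact hF1 t ht.2)).intervalIntegrable
      have i2 : IntervalIntegrable F volume 1 x := by
        apply ((continuous_const.mul cp2).intervalIntegrable 1 x).congr
        intro t ht
        rw [Set.uIoc_of_le hx1.le] at ht
        exact (hF2 t ht.1).symm
      rw [← intervalIntegral.integral_add_adjacent_intervals i1 i2]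
      have e1 : ∫ t in (0:ℝ)..1, F t = q1 1 - q1 0 := by
        rw [intervalIntegral.integral_congr (g := fun t => -(ω^2) * p1 t) ?_]
        · exact intervalIntegral.integral_eq_sub_of_hasDerivAt (fun t _ => hderq1 t)
            ((continuous_const.mul cp1).intervalIntegrable 0 1)
        · rw [Set.uIcc_of_le (by norm_num : (0:ℝ) ≤ 1)]
          intro t ht
          exact hF1 t ht.2
      have e2 : ∫ t in (1:ℝ)..x, F t = q2 x - q2 1 := by
        rw [intervalIntegral.integral_congr_ae ?_]
        · exact intervalIntegral.integral_eq_sub_of_hasDerivAt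
            (f := q2) (f' := fun t => -(ϖ^2) * p2 t) (fun t _ => hderq2 t)
            ((continuous_const.mul cp2).intervalIntegrable 1 x)
        · refine Filter.Eventually.of_forall ?_
          intro t ht
          rw [Set.uIoc_of_le hx1.le] at ht
          exact hF2 t ht.1
      rw [e1, e2, hz2 x hx1.le, hz1 0 (by norm_num), h11']; ring
  · -- nontriviality: y 1 = sin ω ≠ 0
    rw [hy1 1 le_rfl, hp1d]
    simpa using hsinω
  · -- y 2 = 0
    rw [hy2 2 (by norm_num), hp2d]
    beta_reduce
    have h2ϖ : ϖ * ((2:ℝ):ℂ) - ϖ = ϖ := by push_cast; ring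
    rw [h2ϖ]
    have key : ϖ * Complex.sin ω * Complex.cos ϖ + ω * Complex.cos ω * Complex.sin ϖ = 0 := by
      have hsum : ω + ϖ = ((2*α:ℝ):ℂ) := by rw [hωd, hϖd]; push_cast; ring
      have hdiff : ω - ϖ = ((2*β:ℝ):ℂ) * Complex.I := by rw [hωd, hϖd]; push_cast; ring
      have hs1 : Complex.sin ω * Complex.cos ϖ =
          (((Real.sin (2*α):ℝ):ℂ) + ((Real.sinh (2*β):ℝ):ℂ) * Complex.I)/2 := by
        rw [sinMulCos ω ϖ, hsum, hdiff, Complex.sin_mul_I, Complex.ofReal_sin, Complex.ofReal_sinh]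
      have hs2 : Complex.cos ω * Complex.sin ϖ =
          (((Real.sin (2*α):ℝ):ℂ) - ((Real.sinh (2*β):ℝ):ℂ) * Complex.I)/2 := by
        rw [cosMulSin ω ϖ, hsum, hdiff, Complex.sin_mul_I, Complex.ofReal_sin, Complex.ofReal_sinh]
      have hDc : ((α:ℂ)) * ((Real.sin (2*α):ℝ):ℂ) + (β:ℂ) * ((Real.sinh (2*β):ℝ):ℂ) = 0 := by
        exact_mod_cast congrArg (Complex.ofReal) hD
      rw [mul_assoc, hs1, mul_assoc, hs2, hωd, hϖd]
      linear_combination hDc - (β:ℂ) * ((Real.sinh (2*β):ℝ):ℂ) * Complex.I_sq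
    field_simp
    linear_combination key


/-- Mingarelli's example: the Dirichlet problem `-y'' - (9π²/16) y = λ r y` on `[0,2]`
with `r = 1` on `[0,1]`, `r = -1` on `(1,2]`, has a purely imaginary eigenvalue
`λ = iμ`, `μ ≠ 0`. Solutions are taken in the absolutely continuous sense:
`y' (= p y'` with `p ≡ 1)` is AC with a.e. derivative `q y - λ r y`. -/
theorem mingarelli_imaginary_eigenvalue :
    ∃ μ : ℝ, μ ≠ 0 ∧
      ∃ y yd : ℝ → ℂ,
        (∀ x ∈ Set.Icc (0:ℝ) 2, y x = y 0 + ∫ t in (0:ℝ)..x, yd t) ∧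
        (∀ x ∈ Set.Icc (0:ℝ) 2, yd x = yd 0 + ∫ t in (0:ℝ)..x,
          (((-9 * π ^ 2 / 16 : ℝ) : ℂ) * y t -
            Complex.I * (μ : ℂ) * ((if t ≤ 1 then (1:ℝ) else -1) : ℂ) * y t)) ∧
        (∃ x ∈ Set.Icc (0:ℝ) 2, y x ≠ 0) ∧
        y 0 = 0 ∧ y 2 = 0 := by
  obtain ⟨β, hβ0, hβ1, hD⟩ := ivt_step
  exact mingarelli_aux (Real.sqrt (9*π^2/16 + β^2)) β
    (Real.sqrt_pos.mpr (by positivity)) hβ0 (Real.sq_sqrt (by positivity)) hD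
end
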